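/- Let A be a local ring with maximal ideal m_A and residue field κ, let α be algebraic over κ with monic minimal polynomial Q, and let P ∈ A[X] be a monic lift of Q. Then the ring A' = A[X]/(P) is a local ring whose maximal ideal is m_A·A' and whose residue field is isomorphic to κ(α) = κ[X]/(Q). -/

import Mathlib

/-- Let `A` be a local ring with residue field `κ`, `α` algebraic over `κ`
with monic minimal polynomial `Q`, and `P ∈ A[X]` a monic lift of `Q`. Then
`A' = A[X]/(P)` is a local ring, its maximal ideal is `m_A · A'`, and its residue field
is isomorphic to `κ(α) = κ[X]/(Q)`. -/
theorem stmt0 {A : Type*} [CommRing A] [IsLocalRing A]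
    {E : Type*} [Field E] [Algebra (IsLocalRing.ResidueField A) E]
    (α : E) (halg : IsIntegral (IsLocalRing.ResidueField A) α)
    (P : Polynomial A) (hmonic : P.Monic)
    (hlift : P.map (IsLocalRing.residue A) = minpoly (IsLocalRing.ResidueField A) α) :
    ∃ h : IsLocalRing (AdjoinRoot P),
      @IsLocalRing.maximalIdeal (AdjoinRoot P) _ h
          = (IsLocalRing.maximalIdeal A).map (algebraMap A (AdjoinRoot P)) ∧
      Nonempty (@IsLocalRing.ResidueField (AdjoinRoot P) _ h ≃+*
        AdjoinRoot (minpoly (IsLocalRing.ResidueField A) α)) := by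
  classical
  set κ := IsLocalRing.ResidueField A
  set Q := minpoly κ α with hQ
  have hQirr : Irreducible Q := minpoly.irreducible halg
  have : Fact (Irreducible Q) := ⟨hQirr⟩
  -- the key isomorphism
  have hspan : Ideal.span ({P.map (Ideal.Quotient.mk (IsLocalRing.maximalIdeal A))} :
      Set (Polynomial (A ⧸ IsLocalRing.maximalIdeal A))) = Ideal.span {Q} := by
    rw [show P.map (Ideal.Quotient.mk (IsLocalRing.maximalIdeal A)) = Q from hlift]
    rfl
  have e : (AdjoinRoot P ⧸ (IsLocalRing.maximalIdeal A).map (AdjoinRoot.of P)) ≃+*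
      AdjoinRoot Q :=
    (AdjoinRoot.quotAdjoinRootEquivQuotPolynomialQuot (IsLocalRing.maximalIdeal A) P).trans
      (@Ideal.quotEquivOfEq _ _ _ _ (by constructor; intro a b ha; rw [mul_comm]; exact Ideal.mul_mem_left _ b ha)
        (by constructor; intro a b ha; rw [mul_comm]; exact Ideal.mul_mem_left _ b ha) hspan)
  -- J := m_A · A'
  set J : Ideal (AdjoinRoot P) := (IsLocalRing.maximalIdeal A).map (AdjoinRoot.of P) with hJ
  have hJmax : J.IsMaximal :=
    Ideal.Quotient.maximal_of_isField _
      (e.toMulEquiv.isField (Field.toIsField (AdjoinRoot Q)))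
  -- integrality / finiteness
  have : Module.Finite A (AdjoinRoot P) := (AdjoinRoot.powerBasis' hmonic).finite
  have : Algebra.IsIntegral A (AdjoinRoot P) := Algebra.IsIntegral.of_finite A _
  -- every maximal ideal equals J
  have huniq : ∀ M : Ideal (AdjoinRoot P), M.IsMaximal → M = J := by
    intro M hM
    have hcomap : (M.comap (algebraMap A (AdjoinRoot P))).IsMaximal :=
      Ideal.isMaximal_comap_of_isIntegral_of_isMaximal M
    have hcm : M.comap (algebraMap A (AdjoinRoot P)) = IsLocalRing.maximalIdeal A :=
      IsLocalRing.eq_maximalIdeal hcomap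
    have hJM : J ≤ M := by
      rw [hJ, ← hcm, ← AdjoinRoot.algebraMap_eq]
      exact Ideal.map_comap_le
    exact ((hJmax.eq_of_le hM.ne_top hJM)).symm
  have hloc : IsLocalRing (AdjoinRoot P) :=
    IsLocalRing.of_unique_max_ideal ⟨J, hJmax, huniq⟩
  refine ⟨hloc, ?_, ?_⟩
  · rw [AdjoinRoot.algebraMap_eq, ← hJ]
    exact (@IsLocalRing.eq_maximalIdeal _ _ hloc _ hJmax).symm
  · have hmax : @IsLocalRing.maximalIdeal (AdjoinRoot P) _ hloc = J :=
      (@IsLocalRing.eq_maximalIdeal _ _ hloc _ hJmax).symm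
    exact ⟨(Ideal.quotEquivOfEq hmax).trans e⟩
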